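/- Let m, p ≥ 1 and k > 1 be integers and let A = (A_1,…,A_m) be an m-tuple of n×n complex Hermitian matrices. If n ≥ (m+1)((m+1)(k-1) + k(p-1)), then Λ_{(k:p)}(A) is non-empty; that is, there exist p×p real diagonal matrices D_1,…,D_m and an n×(kp) complex matrix V with V*V = I_{kp} such that V*A_jV = D_j ⊗ I_k for all j = 1,…,m. -/

import Mathlib

open Matrix Kronecker

section Helpers

open Finset
open scoped RealInnerProductSpace

set_option linter.unusedSectionVars false
set_option linter.unusedVariables false


open Finset
open scoped RealInnerProductSpace

variable {F : Type*} [NormedAddCommGroup F] [InnerProductSpace ℝ F] [FiniteDimensional ℝ F]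

lemma mem_convexHull_range_iff' {M : ℕ} (y : Fin M → F) (x : F) :
    x ∈ convexHull ℝ (Set.range y) ↔
      ∃ w : Fin M → ℝ, (∀ i, 0 ≤ w i) ∧ ∑ i, w i = 1 ∧ ∑ i, w i • y i = x := by
  constructor
  · intro hx
    rw [convexHull_range_eq_exists_affineCombination] at hx
    obtain ⟨s, w, h0, h1, hx⟩ := hx
    classical
    refine ⟨fun i => if i ∈ s then w i else 0, fun i => ?_, ?_, ?_⟩
    · dsimp only
      split
      · exact h0 _ ‹_›
      · exact le_rfl
    · dsimp only
      rw [Finset.sum_ite_mem, Finset.univ_inter, h1]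
    · rw [← hx, affineCombination_eq_linear_combination s y w h1]
      dsimp only
      rw [Finset.sum_congr rfl (g := fun i => if i ∈ s then w i • y i else 0)
        (fun i _ => by by_cases h : i ∈ s <;> simp [h])]
      rw [Finset.sum_ite_mem, Finset.univ_inter]
  · rintro ⟨w, h0, h1, rfl⟩
    have := affineCombination_mem_convexHull (s := Finset.univ) (v := y) (w := w)
      (fun i _ => h0 i) h1
    rwa [affineCombination_eq_linear_combination _ y w h1] at this

lemma exists_closer {z y : F} (hzy : ⟪z, y⟫ < ‖z‖ ^ 2) :
    ∃ x ∈ segment ℝ z y, ‖x‖ < ‖z‖ := by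
  set q := y - z with hq
  have hzq : ⟪z, q⟫ < 0 := by
    rw [hq, inner_sub_right, real_inner_self_eq_norm_sq]
    linarith
  have hqne : q ≠ 0 := by
    intro h
    rw [h, inner_zero_right] at hzq
    exact lt_irrefl 0 hzq
  have hq2 : (0:ℝ) < ‖q‖ ^ 2 := by
    have := norm_pos_iff.mpr hqne
    positivity
  set ε : ℝ := min 1 (-⟪z, q⟫ / ‖q‖ ^ 2) with hε
  have hεpos : 0 < ε := lt_min one_pos (div_pos (by linarith) hq2)
  have hε1 : ε ≤ 1 := min_le_left _ _
  refine ⟨z + ε • q, ?_, ?_⟩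
  · rw [segment_eq_image']
    exact ⟨ε, ⟨le_of_lt hεpos, hε1⟩, rfl⟩
  · have hval : ‖z + ε • q‖ ^ 2 = ‖z‖ ^ 2 + 2 * (ε * ⟪z, q⟫) + ε ^ 2 * ‖q‖ ^ 2 := by
      rw [norm_add_sq_real, real_inner_smul_right, norm_smul]
      rw [mul_pow, Real.norm_eq_abs, sq_abs]
    have hεle : ε * ‖q‖ ^ 2 ≤ -⟪z, q⟫ := by
      have := min_le_right 1 (-⟪z, q⟫ / ‖q‖ ^ 2)
      calc ε * ‖q‖ ^ 2 ≤ (-⟪z, q⟫ / ‖q‖ ^ 2) * ‖q‖ ^ 2 := by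
            apply mul_le_mul_of_nonneg_right _ (le_of_lt hq2)
            exact this
        _ = -⟪z, q⟫ := by field_simp
    have h2 : ‖z + ε • q‖ ^ 2 < ‖z‖ ^ 2 := by
      have : ε ^ 2 * ‖q‖ ^ 2 = ε * (ε * ‖q‖ ^ 2) := by ring
      nlinarith [mul_lt_mul_of_pos_left hzq hεpos]
    exact lt_of_pow_lt_pow_left₀ 2 (norm_nonneg z) h2

lemma colorful_caratheodory {M k : ℕ} (hk : 0 < k) (hM : Module.finrank ℝ F + 1 ≤ M)
    (g : Fin M → Fin k → F)
    (h0 : ∀ i, ∃ ν : Fin k → ℝ, (∀ t, 0 ≤ ν t) ∧ ∑ t, ν t = 1 ∧ ∑ t, ν t • g i t = 0) :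
    ∃ (τ : Fin M → Fin k) (w : Fin M → ℝ), (∀ i, 0 ≤ w i) ∧ ∑ i, w i = 1 ∧
      ∑ i, w i • g i (τ i) = 0 := by
  classical
  have hM0 : 0 < M := lt_of_lt_of_le (Nat.succ_pos _) hM
  haveI : Nonempty (Fin k) := Fin.pos_iff_nonempty.mp hk
  haveI : Nonempty (Fin M) := Fin.pos_iff_nonempty.mp hM0
  set d : (Fin M → Fin k) → ℝ :=
    fun τ => Metric.infDist 0 (convexHull ℝ (Set.range fun i => g i (τ i))) with hd
  obtain ⟨τ, -, hτ⟩ := Finset.exists_min_image Finset.univ d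
    ⟨Classical.arbitrary _, Finset.mem_univ _⟩
  set y : Fin M → F := fun i => g i (τ i) with hy
  set K := convexHull ℝ (Set.range y) with hK
  have hKc : IsCompact K := (Set.finite_range y).isCompact_convexHull ℝ
  have hKne : K.Nonempty :=
    ⟨y (Classical.arbitrary _), subset_convexHull _ _ (Set.mem_range_self _)⟩
  obtain ⟨z, hzK, hzd⟩ := hKc.exists_infDist_eq_dist hKne 0
  by_cases hz0 : z = 0
  · obtain ⟨μ, h1, h2, h3⟩ := (mem_convexHull_range_iff' y z).1 hzK
    exact ⟨τ, μ, h1, h2, by rw [h3, hz0]⟩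
  · exfalso
    have hmin : ∀ x ∈ K, ‖z‖ ≤ ‖x‖ := by
      intro x hx
      have h := Metric.infDist_le_dist_of_mem (x := (0:F)) hx
      rw [hzd] at h
      simpa [dist_zero_left] using h
    have hgeq : ∀ x ∈ K, ‖z‖ ^ 2 ≤ ⟪z, x⟫ := by
      intro x hx
      by_contra h
      push_neg at h
      obtain ⟨x', hx', hlt⟩ := exists_closer h
      exact absurd (hmin x' ((convex_convexHull ℝ _).segment_subset hzK hx hx'))
        (not_le.mpr hlt)
    obtain ⟨μ, hμ0, hμ1, hμz⟩ := (mem_convexHull_range_iff' y z).1 hzK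
    have hsupp : ∀ i, μ i ≠ 0 → ⟪z, y i⟫ = ‖z‖ ^ 2 := by
      have h1 : ∑ i, μ i * ⟪z, y i⟫ = ‖z‖ ^ 2 := by
        have h2 : ⟪z, ∑ i, μ i • y i⟫ = ∑ i, μ i * ⟪z, y i⟫ := by
          rw [inner_sum]
          exact Finset.sum_congr rfl fun i _ => real_inner_smul_right _ _ _
        rw [← h2, hμz, real_inner_self_eq_norm_sq]
      have hzero : ∑ i, μ i * (⟪z, y i⟫ - ‖z‖ ^ 2) = 0 := by
        have h2 : ∑ i, μ i * ‖z‖ ^ 2 = ‖z‖ ^ 2 := by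
          rw [← Finset.sum_mul, hμ1, one_mul]
        simp only [mul_sub]
        rw [Finset.sum_sub_distrib, h1, h2, sub_self]
      intro i hi
      have hterm := (Finset.sum_eq_zero_iff_of_nonneg
        (fun i _ => mul_nonneg (hμ0 i)
          (sub_nonneg.mpr (hgeq (y i) (subset_convexHull _ _ (Set.mem_range_self i)))))).1
        hzero i (Finset.mem_univ i)
      rcases mul_eq_zero.1 hterm with h | h
      · exact absurd h hi
      · have := sub_eq_zero.1 h
        linarith
    -- z lies in convex hull of the points on the supporting hyperplane
    set t0 : Finset (Fin M) := Finset.univ.filter (fun i => μ i ≠ 0) with ht0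
    have hsum_t0 : ∑ i ∈ t0, μ i = 1 := by
      rw [ht0, Finset.sum_filter_ne_zero]
      exact hμ1
    have hz_mem : z ∈ convexHull ℝ ({x | ⟪z, x⟫ = ‖z‖ ^ 2} ∩ Set.range y) := by
      have hcm := Finset.centerMass_mem_convexHull t0 (w := μ) (z := y)
        (fun i _ => hμ0 i) (by rw [hsum_t0]; exact one_pos)
        (s := {x | ⟪z, x⟫ = ‖z‖ ^ 2} ∩ Set.range y)
        (fun i hi => ⟨hsupp i (Finset.mem_filter.1 hi).2, Set.mem_range_self i⟩)
      have hcmz : t0.centerMass μ y = z := by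
        rw [Finset.centerMass, hsum_t0, inv_one, one_smul]
        rw [Finset.sum_filter_of_ne (fun i _ h => by
          intro hμ; exact h (by rw [hμ, zero_smul]))]
        exact hμz
      rwa [hcmz] at hcm
    rw [convexHull_eq_union] at hz_mem
    simp only [Set.mem_iUnion] at hz_mem
    obtain ⟨T, hT_sub, hT_ai, hzT⟩ := hz_mem
    have hTne : T.Nonempty := by
      rcases T.eq_empty_or_nonempty with h | h
      · rw [h] at hzT
        simp at hzT
      · exact h
    obtain ⟨t₀, ht₀⟩ := hTne
    -- card bound on T
    have hzsq : (0:ℝ) < ‖z‖ ^ 2 := by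
      have := norm_pos_iff.mpr hz0
      positivity
    have hTcard : T.card ≤ Module.finrank ℝ F := by
      have hli0 := (affineIndependent_iff_linearIndependent_vsub ℝ
        ((↑) : T → F) ⟨t₀, ht₀⟩).1 hT_ai
      have hmemZ : ∀ (v : {x : T // x ≠ ⟨t₀, ht₀⟩}),
          ((v : T) : F) -ᵥ ((⟨t₀, ht₀⟩ : T) : F) ∈ (ℝ ∙ z)ᗮ := by
        intro v
        rw [Submodule.mem_orthogonal_singleton_iff_inner_right]
        have h1 : ⟪z, ((v : T) : F)⟫ = ‖z‖ ^ 2 := (hT_sub (v : T).2).1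
        have h2 : ⟪z, (t₀ : F)⟫ = ‖z‖ ^ 2 := (hT_sub ht₀).1
        rw [vsub_eq_sub, inner_sub_right, h1, h2, sub_self]
      have hli : LinearIndependent ℝ
          (fun v : {x : T // x ≠ ⟨t₀, ht₀⟩} =>
            (⟨((v : T) : F) -ᵥ ((⟨t₀, ht₀⟩ : T) : F), hmemZ v⟩ : (ℝ ∙ z)ᗮ)) := by
        apply LinearIndependent.of_comp ((ℝ ∙ z)ᗮ).subtype
        exact hli0
      have hcard1 := hli.fintype_card_le_finrank
      have hcard2 : Fintype.card {x : T // x ≠ ⟨t₀, ht₀⟩} = T.card - 1 := by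
        rw [Fintype.card_subtype_compl, Fintype.card_subtype_eq, Fintype.card_coe]
      have hrank : Module.finrank ℝ ((ℝ ∙ z)ᗮ) + 1 = Module.finrank ℝ F := by
        have h1 := Submodule.finrank_add_finrank_orthogonal (K := (ℝ ∙ z))
        rw [finrank_span_singleton hz0] at h1
        omega
      have hTc1 : 1 ≤ T.card := Finset.card_pos.mpr ⟨t₀, ht₀⟩
      omega
    -- choose an index not used by T
    have hchoice : ∀ x ∈ T, ∃ i, y i = x := fun x hx => (hT_sub hx).2
    set J : Finset (Fin M) := T.attach.image
      (fun x => Classical.choose (hchoice x.1 x.2)) with hJ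
    have hJcard : J.card ≤ Module.finrank ℝ F := by
      refine le_trans (le_trans Finset.card_image_le ?_) hTcard
      rw [Finset.card_attach]
    have hcompl : Jᶜ.Nonempty := by
      rw [← Finset.card_pos, Finset.card_compl, Fintype.card_fin]
      omega
    obtain ⟨i₀, hi₀⟩ := hcompl
    rw [Finset.mem_compl] at hi₀
    -- exchange step
    obtain ⟨ν, hν0, hν1, hνz⟩ := h0 i₀
    have hex : ∃ t', ⟪z, g i₀ t'⟫ ≤ 0 := by
      by_contra h
      push_neg at h
      have h1 : ∑ t, ν t * ⟪z, g i₀ t⟫ = 0 := by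
        have h2 : ⟪z, ∑ t, ν t • g i₀ t⟫ = ∑ t, ν t * ⟪z, g i₀ t⟫ := by
          rw [inner_sum]
          exact Finset.sum_congr rfl fun t _ => real_inner_smul_right _ _ _
        rw [← h2, hνz, inner_zero_right]
      have hext : ∃ t, 0 < ν t := by
        by_contra h2
        push_neg at h2
        have hzero : ∀ t, ν t = 0 := fun t => le_antisymm (h2 t) (hν0 t)
        rw [Finset.sum_congr rfl fun t _ => hzero t, Finset.sum_const_zero] at hν1
        exact one_ne_zero hν1.symm
      obtain ⟨t1, ht1⟩ := hext
      have hpos : 0 < ∑ t, ν t * ⟪z, g i₀ t⟫ :=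
        Finset.sum_pos' (fun t _ => mul_nonneg (hν0 t) (le_of_lt (h t)))
          ⟨t1, Finset.mem_univ _, mul_pos ht1 (h t1)⟩
      linarith
    obtain ⟨t', ht'⟩ := hex
    set τ' := Function.update τ i₀ t' with hτ'
    set K' := convexHull ℝ (Set.range fun i => g i (τ' i)) with hK'
    have hzK' : z ∈ K' := by
      refine convexHull_mono ?_ hzT
      intro x hx
      have hspec := Classical.choose_spec (hchoice x hx)
      set ix := Classical.choose (hchoice x hx) with hix
      have hmemJ : ix ∈ J := Finset.mem_image_of_mem _ (Finset.mem_attach _ ⟨x, hx⟩)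
      have hne : ix ≠ i₀ := fun h => hi₀ (h ▸ hmemJ)
      refine ⟨ix, ?_⟩
      show g ix (Function.update τ i₀ t' ix) = x
      rw [Function.update_of_ne hne]
      exact hspec
    have hy'K' : g i₀ t' ∈ K' :=
      subset_convexHull _ _ ⟨i₀, by
        show g i₀ (Function.update τ i₀ t' i₀) = g i₀ t'
        rw [Function.update_self]⟩
    have hlt : ⟪z, g i₀ t'⟫ < ‖z‖ ^ 2 := lt_of_le_of_lt ht' hzsq
    obtain ⟨x', hx', hltx⟩ := exists_closer hlt
    have hx'K' : x' ∈ K' := (convex_convexHull ℝ _).segment_subset hzK' hy'K' hx'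
    have hd' : d τ' ≤ ‖x'‖ := by
      have := Metric.infDist_le_dist_of_mem (x := (0:F)) hx'K'
      rwa [dist_zero_left] at this
    have hdτ : d τ = ‖z‖ := by
      rw [hd]
      simp only [← hy, ← hK]
      rw [hzd, dist_zero_left]
    have hcontra := hτ τ' (Finset.mem_univ _)
    rw [hdτ] at hcontra
    linarith


lemma tverberg_equal_masses {m k M : ℕ} (hk : 1 ≤ k) (hM : (k-1) * (m+1) + 1 ≤ M)
    (x : Fin M → Fin m → ℝ) :
    ∃ (τ : Fin M → Fin k) (lam : Fin M → ℝ) (c : Fin m → ℝ),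
      (∀ i, 0 ≤ lam i) ∧
      (∀ t : Fin k, ∑ i, (if τ i = t then lam i else 0) = 1) ∧
      (∀ t : Fin k, ∀ j, ∑ i, (if τ i = t then lam i * x i j else 0) = c j) := by
  classical
  have klt : k - 1 < k := Nat.sub_lt (Nat.lt_of_lt_of_le one_pos hk) one_pos
  have hkR : (k:ℝ) ≠ 0 := Nat.cast_ne_zero.mpr (by omega)
  set xbar : Fin M → Fin (m+1) → ℝ := fun i => Fin.snoc (x i) 1 with hxbar
  set u : Fin k → Fin (k-1) → ℝ :=
    fun t r => (if (t:ℕ) = (r:ℕ) then 1 else 0) - (if (t:ℕ) = k-1 then 1 else 0) with hu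
  set g0 : Fin M → Fin k → ((Fin (k-1) × Fin (m+1)) → ℝ) :=
    fun i t rq => u t rq.1 * xbar i rq.2 with hg0
  have hone : ∀ (r : Fin (k-1)), ∑ t : Fin k, (if (t:ℕ) = (r:ℕ) then (1:ℝ) else 0) = 1 := by
    intro r
    rw [Finset.sum_eq_single (⟨(r:ℕ), lt_trans r.2 klt⟩ : Fin k)]
    · simp
    · intro t _ ht
      rw [if_neg]
      intro h
      exact ht (Fin.ext h)
    · intro h
      exact absurd (Finset.mem_univ _) h
  have hone' : ∑ t : Fin k, (if (t:ℕ) = k-1 then (1:ℝ) else 0) = 1 := by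
    rw [Finset.sum_eq_single (⟨k-1, klt⟩ : Fin k)]
    · simp
    · intro t _ ht
      rw [if_neg]
      intro h
      exact ht (Fin.ext h)
    · intro h
      exact absurd (Finset.mem_univ _) h
  have husum : ∀ r : Fin (k-1), ∑ t : Fin k, u t r = 0 := by
    intro r
    rw [hu]
    simp only
    rw [Finset.sum_sub_distrib, hone r, hone', sub_self]
  -- transport to EuclideanSpace and apply colorful Caratheodory
  set L := (WithLp.linearEquiv 2 ℝ ((Fin (k-1) × Fin (m+1)) → ℝ)).symm with hL
  have hrank : Module.finrank ℝ (EuclideanSpace ℝ (Fin (k-1) × Fin (m+1))) + 1 ≤ M := by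
    rw [finrank_euclideanSpace, Fintype.card_prod, Fintype.card_fin, Fintype.card_fin]
    exact hM
  have h0 : ∀ i, ∃ ν : Fin k → ℝ, (∀ t, 0 ≤ ν t) ∧ ∑ t, ν t = 1 ∧
      ∑ t, ν t • L (g0 i t) = 0 := by
    intro i
    refine ⟨fun _ => (k:ℝ)⁻¹, fun _ => by positivity, ?_, ?_⟩
    · rw [Finset.sum_const, Finset.card_univ, Fintype.card_fin, nsmul_eq_mul]
      field_simp
    · have hker : ∑ t, (k:ℝ)⁻¹ • g0 i t = 0 := by
        funext rq
        rw [Finset.sum_apply]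
        simp only [Pi.smul_apply, smul_eq_mul, Pi.zero_apply, hg0]
        rw [← Finset.mul_sum, ← Finset.sum_mul, husum rq.1]
        ring
      calc ∑ t, (k:ℝ)⁻¹ • L (g0 i t) = L (∑ t, (k:ℝ)⁻¹ • g0 i t) := by
            rw [map_sum]
            exact Finset.sum_congr rfl fun t _ => (map_smul L _ _).symm
        _ = 0 := by rw [hker, map_zero]
  obtain ⟨τ, w, hw0, hw1, hwL⟩ := colorful_caratheodory
    (Nat.lt_of_lt_of_le one_pos hk) hrank (fun i t => L (g0 i t)) h0
  have hsum0 : ∑ i, w i • g0 i (τ i) = 0 := by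
    apply (WithLp.linearEquiv 2 ℝ ((Fin (k-1) × Fin (m+1)) → ℝ)).symm.injective
    rw [map_sum, map_zero]
    rw [← hwL]
    exact Finset.sum_congr rfl fun i _ => map_smul L _ _
  have hcoord : ∀ (r : Fin (k-1)) (a : Fin (m+1)),
      ∑ i, w i * (u (τ i) r * xbar i a) = 0 := by
    intro r a
    have h := congrFun hsum0 (r, a)
    rw [Finset.sum_apply] at h
    simpa [hg0] using h
  set z : Fin k → Fin (m+1) → ℝ :=
    fun t a => ∑ i, (if τ i = t then w i * xbar i a else 0) with hz
  have hregroup : ∀ (r : Fin (k-1)) (a : Fin (m+1)), ∑ t, u t r * z t a = 0 := by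
    intro r a
    rw [← hcoord r a]
    have hswap : ∑ t, u t r * z t a
        = ∑ i, ∑ t, (if τ i = t then u t r * (w i * xbar i a) else 0) := by
      rw [Finset.sum_comm]
      refine Finset.sum_congr rfl fun t _ => ?_
      rw [hz]
      simp only
      rw [Finset.mul_sum]
      refine Finset.sum_congr rfl fun i _ => ?_
      split <;> ring
    rw [hswap]
    refine Finset.sum_congr rfl fun i _ => ?_
    rw [Finset.sum_ite_eq]
    simp only [Finset.mem_univ, if_true]
    ring
  set tlast : Fin k := ⟨k-1, klt⟩ with htlast
  have hindic : ∀ (t' : Fin k) (a : Fin (m+1)),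
      ∑ t : Fin k, (if (t:ℕ) = (t':ℕ) then (1:ℝ) else 0) * z t a = z t' a := by
    intro t' a
    rw [Finset.sum_eq_single t']
    · simp
    · intro t _ ht
      rw [if_neg, zero_mul]
      intro h
      exact ht (Fin.ext h)
    · intro h
      exact absurd (Finset.mem_univ _) h
  have hzeq : ∀ (t : Fin k) (a : Fin (m+1)), z t a = z tlast a := by
    intro t a
    rcases Nat.lt_or_ge (t:ℕ) (k-1) with hlt | hge
    · have h := hregroup ⟨(t:ℕ), hlt⟩ a
      rw [hu] at h
      simp only at h
      have hexp : ∑ t' : Fin k, ((if (t':ℕ) = (t:ℕ) then (1:ℝ) else 0)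
          - (if (t':ℕ) = k-1 then 1 else 0)) * z t' a = z t a - z tlast a := by
        rw [Finset.sum_congr rfl (fun t' _ => sub_mul _ _ _), Finset.sum_sub_distrib,
          hindic t a, hindic tlast a]
      rw [hexp] at h
      linarith
    · have : (t:ℕ) = k - 1 := le_antisymm (Nat.le_sub_one_of_lt t.2) hge
      have : t = tlast := Fin.ext this
      rw [this]
  have hmass : ∀ t : Fin k, z t (Fin.last m) = ∑ i, (if τ i = t then w i else 0) := by
    intro t
    rw [hz]
    refine Finset.sum_congr rfl fun i _ => ?_
    have : xbar i (Fin.last m) = 1 := by rw [hxbar]; simp [Fin.snoc_last]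
    rw [this, mul_one]
  have hmass_sum : ∑ t, z t (Fin.last m) = 1 := by
    rw [Finset.sum_congr rfl fun t _ => hmass t, Finset.sum_comm]
    rw [← hw1]
    refine Finset.sum_congr rfl fun i _ => ?_
    rw [Finset.sum_ite_eq]
    simp
  have hzlast : z tlast (Fin.last m) = (k:ℝ)⁻¹ := by
    have h1 : ∑ t : Fin k, z t (Fin.last m) = (k:ℝ) * z tlast (Fin.last m) := by
      rw [Finset.sum_congr rfl fun t _ => hzeq t (Fin.last m)]
      rw [Finset.sum_const, Finset.card_univ, Fintype.card_fin, nsmul_eq_mul]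
    rw [hmass_sum] at h1
    field_simp
    linarith
  refine ⟨τ, fun i => (k:ℝ) * w i, fun j => (k:ℝ) * z tlast (Fin.castSucc j),
    fun i => mul_nonneg (by positivity) (hw0 i), ?_, ?_⟩
  · intro t
    have : ∑ i, (if τ i = t then (k:ℝ) * w i else 0)
        = (k:ℝ) * ∑ i, (if τ i = t then w i else 0) := by
      rw [Finset.mul_sum]
      refine Finset.sum_congr rfl fun i _ => ?_
      split <;> ring
    rw [this, ← hmass t, hzeq t (Fin.last m), hzlast]
    field_simp
  · intro t j
    have hx : ∀ i, xbar i (Fin.castSucc j) = x i j := by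
      intro i
      rw [hxbar]
      simp [Fin.snoc_castSucc]
    have : ∑ i, (if τ i = t then (k:ℝ) * w i * x i j else 0)
        = (k:ℝ) * ∑ i, (if τ i = t then w i * xbar i (Fin.castSucc j) else 0) := by
      rw [Finset.mul_sum]
      refine Finset.sum_congr rfl fun i _ => ?_
      rw [hx i]
      split <;> ring
    rw [this]
    have hzz : ∑ i, (if τ i = t then w i * xbar i (Fin.castSucc j) else 0)
        = z t (Fin.castSucc j) := rfl
    rw [hzz, hzeq t (Fin.castSucc j)]


open Submodule Module
open scoped InnerProductSpace ComplexConjugate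

noncomputable section

lemma exists_quasi_eigenvector {n : ℕ} (T : EuclideanSpace ℂ (Fin n) →ₗ[ℂ] EuclideanSpace ℂ (Fin n))
    (W : Submodule ℂ (EuclideanSpace ℂ (Fin n))) (hW : finrank ℂ W < n) :
    ∃ (w : EuclideanSpace ℂ (Fin n)) (lam : ℂ),
      ‖w‖ = 1 ∧ w ∈ Wᗮ ∧ T w - lam • w ∈ W := by
  have hfr : finrank ℂ (EuclideanSpace ℂ (Fin n)) = n := finrank_euclideanSpace_fin
  have hne : Wᗮ ≠ ⊥ := by
    intro h
    have h2 := Submodule.finrank_add_finrank_orthogonal (K := W)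
    rw [h, finrank_bot, hfr] at h2
    omega
  haveI : Nontrivial Wᗮ := Submodule.nontrivial_iff_ne_bot.mpr hne
  set L : Module.End ℂ Wᗮ :=
    ((orthogonalProjection Wᗮ).toLinearMap).comp (T.comp (Wᗮ.subtype)) with hL
  obtain ⟨μ, hμ⟩ := Module.End.exists_eigenvalue L
  obtain ⟨v, hv⟩ := hμ.exists_hasEigenvector
  have hv0 : (v : EuclideanSpace ℂ (Fin n)) ≠ 0 := fun h => hv.right (Submodule.coe_eq_zero.mp h)
  have hnv : ‖(v : EuclideanSpace ℂ (Fin n))‖ ≠ 0 := norm_ne_zero_iff.mpr hv0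
  set c : ℂ := ((‖(v : EuclideanSpace ℂ (Fin n))‖ : ℝ) : ℂ)⁻¹ with hc
  have hmemW : T ↑v - μ • (↑v : EuclideanSpace ℂ (Fin n)) ∈ W := by
    have h1 : T ↑v - ↑(orthogonalProjection Wᗮ (T ↑v)) ∈ (Wᗮ)ᗮ :=
      Submodule.sub_starProjection_mem_orthogonal (K := Wᗮ) _
    rw [Submodule.orthogonal_orthogonal] at h1
    have h2 : ((orthogonalProjection Wᗮ (T ↑v) : Wᗮ) : EuclideanSpace ℂ (Fin n))
        = μ • (↑v : EuclideanSpace ℂ (Fin n)) := by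
      have h3 := hv.apply_eq_smul
      have h4 : L v = μ • v := h3
      have h5 : ((L v : Wᗮ) : EuclideanSpace ℂ (Fin n))
          = ((orthogonalProjection Wᗮ (T ↑v) : Wᗮ) : EuclideanSpace ℂ (Fin n)) := rfl
      rw [← h5, h4]
      rfl
    rwa [h2] at h1
  refine ⟨c • (v : EuclideanSpace ℂ (Fin n)), μ, ?_, ?_, ?_⟩
  · rw [norm_smul, hc]
    rw [norm_inv, Complex.norm_real, Real.norm_eq_abs,
      abs_of_nonneg (norm_nonneg _)]
    field_simp
  · exact Wᗮ.smul_mem c v.2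
  · have : T (c • ↑v) - μ • (c • (↑v : EuclideanSpace ℂ (Fin n)))
        = c • (T ↑v - μ • ↑v) := by
      rw [_root_.map_smul, smul_sub, smul_comm μ c]
    rw [this]
    exact W.smul_mem c hmemW

lemma seq_lemma {n m : ℕ} (hm : 0 < m) (T : Fin m → (EuclideanSpace ℂ (Fin n) →ₗ[ℂ] EuclideanSpace ℂ (Fin n)))
    (hT : ∀ j, (T j).IsSymmetric) :
    ∀ (M : ℕ) (W : Submodule ℂ (EuclideanSpace ℂ (Fin n))), finrank ℂ W + M * m < n →
      ∃ w : Fin (M+1) → EuclideanSpace ℂ (Fin n),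
        (∀ s t, ⟪w s, w t⟫_ℂ = if s = t then 1 else 0) ∧
        (∀ s, w s ∈ Wᗮ) ∧
        (∀ j s t, s ≠ t → ⟪w s, (T j) (w t)⟫_ℂ = 0) := by
  intro M
  induction M with
  | zero =>
    intro W hW
    obtain ⟨w0, lam, hn1, hmem, _⟩ := exists_quasi_eigenvector (T ⟨0, hm⟩) W (by omega)
    refine ⟨fun _ => w0, ?_, fun _ => hmem, ?_⟩
    · intro s t
      rw [if_pos (Fin.ext (by omega))]
      rw [inner_self_eq_norm_sq_to_K, hn1]
      norm_num
    · intro j s t hst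
      exact absurd (Fin.ext (by omega)) hst
  | succ M ih =>
    intro W hW
    have hWn : finrank ℂ W < n := lt_of_le_of_lt (Nat.le_add_right _ _) hW
    obtain ⟨w0, lam, hn1, hmem, hquasi⟩ := exists_quasi_eigenvector (T ⟨0, hm⟩) W hWn
    set f : Fin m → EuclideanSpace ℂ (Fin n) :=
      fun j => if j = ⟨0, hm⟩ then w0 else (T j) w0 with hf
    set W1 := W ⊔ Submodule.span ℂ (Set.range f) with hW1
    have hfr1 : finrank ℂ W1 ≤ finrank ℂ W + m := by
      refine le_trans (Submodule.finrank_add_le_finrank_add_finrank _ _) ?_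
      have h2 := finrank_range_le_card (R := ℂ) f
      unfold Set.finrank at h2
      rw [Fintype.card_fin] at h2
      omega
    have harith : (M+1) * m = M * m + m := by ring
    obtain ⟨w', hon, hort, hcross⟩ := ih W1 (by omega)
    have hw0W1 : w0 ∈ W1 := by
      apply Submodule.mem_sup_right
      apply Submodule.subset_span
      exact ⟨⟨0, hm⟩, by rw [hf]; simp⟩
    have hWleW1 : W ≤ W1 := le_sup_left
    have hperp : ∀ t, ∀ u ∈ W1, ⟪u, w' t⟫_ℂ = 0 := by
      intro t u hu
      exact (Submodule.mem_orthogonal W1 (w' t)).1 (hort t) u hu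
    have hTw0 : ∀ j, (T j) w0 ∈ W1 := by
      intro j
      by_cases hj : j = ⟨0, hm⟩
      · subst hj
        have h2 := W1.add_mem (W1.smul_mem lam hw0W1) (hWleW1 hquasi)
        simpa using h2
      · have hfj : f j = (T j) w0 := by rw [hf]; simp [hj]
        exact Submodule.mem_sup_right (Submodule.subset_span ⟨j, hfj⟩)
    refine ⟨Fin.cons w0 w', ?_, ?_, ?_⟩
    · intro s t
      refine Fin.cases ?_ ?_ s <;> [skip; intro s'] <;>
        (refine Fin.cases ?_ ?_ t <;> [skip; intro t'])
      · simp only [Fin.cons_zero, if_pos rfl]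
        rw [inner_self_eq_norm_sq_to_K, hn1]
        norm_num
      · simp only [Fin.cons_zero, Fin.cons_succ]
        rw [if_neg (Fin.succ_ne_zero t').symm]
        exact hperp t' w0 hw0W1
      · simp only [Fin.cons_zero, Fin.cons_succ]
        rw [if_neg (Fin.succ_ne_zero s')]
        exact inner_eq_zero_symm.mp (hperp s' w0 hw0W1)
      · simp only [Fin.cons_succ]
        rw [hon s' t']
        simp [Fin.succ_inj]
    · intro s
      refine Fin.cases ?_ ?_ s
      · exact hmem
      · intro s'
        exact (Submodule.orthogonal_le hWleW1) (hort s')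
    · intro j s t
      refine Fin.cases ?_ ?_ s <;> [skip; intro s'] <;>
        (refine Fin.cases ?_ ?_ t <;> [skip; intro t']) <;> intro hst
      · exact absurd rfl hst
      · simp only [Fin.cons_zero, Fin.cons_succ]
        rw [← hT j w0 (w' t')]
        exact hperp t' _ (hTw0 j)
      · simp only [Fin.cons_zero, Fin.cons_succ]
        exact ((Submodule.mem_orthogonal' W1 (w' s')).1 (hort s')) _ (hTw0 j)
      · simp only [Fin.cons_succ]
        exact hcross j s' t' (fun h => hst (congrArg Fin.succ h))

lemma block_lemma {n m k : ℕ} (hm : 0 < m) (hk : 1 ≤ k)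
    (T : Fin m → (EuclideanSpace ℂ (Fin n) →ₗ[ℂ] EuclideanSpace ℂ (Fin n)))
    (hT : ∀ j, (T j).IsSymmetric)
    (W : Submodule ℂ (EuclideanSpace ℂ (Fin n)))
    (hdim : finrank ℂ W + ((k-1) * (m+1)) * m < n) :
    ∃ (u : Fin k → EuclideanSpace ℂ (Fin n)) (c : Fin m → ℝ),
      (∀ t, u t ∈ Wᗮ) ∧
      (∀ s t, ⟪u s, u t⟫_ℂ = if s = t then 1 else 0) ∧
      (∀ j s t, ⟪u s, (T j) (u t)⟫_ℂ = if s = t then ((c j : ℝ) : ℂ) else 0) := by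
  classical
  set M : ℕ := (k-1) * (m+1) with hMdef
  obtain ⟨w, hon, hort, hcross⟩ := seq_lemma hm T hT M W hdim
  set x : Fin (M+1) → Fin m → ℝ := fun i j => (⟪w i, (T j) (w i)⟫_ℂ).re with hx
  have hreal : ∀ i j, (⟪w i, (T j) (w i)⟫_ℂ) = ((x i j : ℝ) : ℂ) := by
    intro i j
    have h1 : (starRingEnd ℂ) (⟪w i, (T j) (w i)⟫_ℂ) = ⟪w i, (T j) (w i)⟫_ℂ := by
      rw [inner_conj_symm]
      exact hT j (w i) (w i)
    exact (Complex.conj_eq_iff_re.mp h1).symm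
  obtain ⟨τ, lam, c, hlam0, hmass, hbary⟩ := tverberg_equal_masses hk (le_refl (M+1)) x
  set coeff : Fin k → Fin (M+1) → ℝ :=
    fun t i => if τ i = t then Real.sqrt (lam i) else 0 with hcoeff
  set u : Fin k → EuclideanSpace ℂ (Fin n) :=
    fun t => ∑ i, ((coeff t i : ℝ) : ℂ) • w i with hu
  have expand : ∀ (a b : Fin (M+1) → ℝ)
      (L : EuclideanSpace ℂ (Fin n) →ₗ[ℂ] EuclideanSpace ℂ (Fin n)),
      ⟪∑ i, ((a i : ℝ) : ℂ) • w i, L (∑ i, ((b i : ℝ) : ℂ) • w i)⟫_ℂ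
        = ∑ i, ∑ l, ((a i : ℝ) : ℂ) * ((b l : ℝ) : ℂ) * ⟪w i, L (w l)⟫_ℂ := by
    intro a b L
    rw [map_sum, sum_inner]
    refine Finset.sum_congr rfl fun i _ => ?_
    rw [inner_smul_left, Complex.conj_ofReal, inner_sum, Finset.mul_sum]
    refine Finset.sum_congr rfl fun l _ => ?_
    rw [_root_.map_smul, inner_smul_right]
    ring
  have hdiag_id : ∀ i l, ⟪w i, w l⟫_ℂ = if i = l then 1 else 0 := hon
  have hdiag_T : ∀ j i l, ⟪w i, (T j) (w l)⟫_ℂ = if i = l then ((x i j : ℝ) : ℂ) else 0 := by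
    intro j i l
    by_cases h : i = l
    · subst h
      rw [if_pos rfl]
      exact hreal i j
    · rw [if_neg h]
      exact hcross j i l h
  have hproduu : ∀ s t, ⟪u s, u t⟫_ℂ = ∑ i, ((coeff s i * coeff t i : ℝ) : ℂ) := by
    intro s t
    rw [hu]
    simp only
    rw [show (∑ i, ((coeff t i : ℝ) : ℂ) • w i)
      = LinearMap.id (R := ℂ) (∑ i, ((coeff t i : ℝ) : ℂ) • w i) from rfl]
    rw [expand]
    refine Finset.sum_congr rfl fun i _ => ?_
    rw [Finset.sum_eq_single i]
    · rw [LinearMap.id_apply] at *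
      rw [hdiag_id i i, if_pos rfl, mul_one]
      push_cast
      ring
    · intro l _ hl
      rw [LinearMap.id_apply, hdiag_id i l, if_neg (fun h => hl h.symm), mul_zero]
    · intro h
      exact absurd (Finset.mem_univ _) h
  have hproduT : ∀ j s t, ⟪u s, (T j) (u t)⟫_ℂ
      = ∑ i, ((coeff s i * coeff t i * x i j : ℝ) : ℂ) := by
    intro j s t
    rw [hu]
    simp only
    rw [expand]
    refine Finset.sum_congr rfl fun i _ => ?_
    rw [Finset.sum_eq_single i]
    · rw [hdiag_T j i i, if_pos rfl]
      push_cast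
      ring
    · intro l _ hl
      rw [hdiag_T j i l, if_neg (fun h => hl h.symm), mul_zero]
    · intro h
      exact absurd (Finset.mem_univ _) h
  have hcc : ∀ s t i, s ≠ t → coeff s i * coeff t i = 0 := by
    intro s t i hst
    rw [hcoeff]
    simp only
    by_cases h1 : τ i = s
    · rw [if_pos h1, if_neg (fun h2 => hst (by rw [← h1, h2]))]
      ring
    · rw [if_neg h1]
      ring
  refine ⟨u, c, ?_, ?_, ?_⟩
  · intro t
    rw [hu]
    exact Submodule.sum_mem _ fun i _ => Submodule.smul_mem _ _ (hort i)
  · intro s t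
    rw [hproduu s t]
    by_cases hst : s = t
    · subst hst
      rw [if_pos rfl]
      have : ∀ i, (coeff s i * coeff s i : ℝ) = (if τ i = s then lam i else 0) := by
        intro i
        rw [hcoeff]
        simp only
        by_cases h : τ i = s
        · rw [if_pos h, if_pos h, Real.mul_self_sqrt (hlam0 i)]
        · rw [if_neg h, if_neg h, mul_zero]
      rw [Finset.sum_congr rfl fun i _ => by rw [this i]]
      rw [← Complex.ofReal_sum, hmass s]
      norm_num
    · rw [if_neg hst]
      rw [Finset.sum_congr rfl fun i _ => by rw [hcc s t i hst]]
      simp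
  · intro j s t
    rw [hproduT j s t]
    by_cases hst : s = t
    · subst hst
      rw [if_pos rfl]
      have : ∀ i, (coeff s i * coeff s i * x i j : ℝ)
          = (if τ i = s then lam i * x i j else 0) := by
        intro i
        rw [hcoeff]
        simp only
        by_cases h : τ i = s
        · rw [if_pos h, if_pos h, Real.mul_self_sqrt (hlam0 i)]
        · rw [if_neg h, if_neg h]
          ring
      rw [Finset.sum_congr rfl fun i _ => by rw [this i]]
      rw [← Complex.ofReal_sum, hbary s j]
    · rw [if_neg hst]
      rw [Finset.sum_congr rfl fun i _ => by rw [hcc s t i hst, zero_mul]]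
      simp

lemma blocks_lemma {n m k p : ℕ} (hm : 0 < m) (hk : 1 < k)
    (T : Fin m → (EuclideanSpace ℂ (Fin n) →ₗ[ℂ] EuclideanSpace ℂ (Fin n)))
    (hT : ∀ j, (T j).IsSymmetric)
    (hn : (m + 1) * ((m + 1) * (k - 1) + k * (p - 1)) ≤ n) :
    ∀ b, b ≤ p → ∃ (u : Fin b → Fin k → EuclideanSpace ℂ (Fin n)) (d : Fin b → Fin m → ℝ),
      (∀ a s a' t, ⟪u a s, u a' t⟫_ℂ = if a = a' ∧ s = t then 1 else 0) ∧
      (∀ j a s a' t, ⟪u a s, (T j) (u a' t)⟫_ℂ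
        = if a = a' ∧ s = t then ((d a j : ℝ) : ℂ) else 0) := by
  intro b
  induction b with
  | zero =>
    intro _
    exact ⟨Fin.elim0, Fin.elim0, fun a => a.elim0, fun j a => a.elim0⟩
  | succ b ih =>
    intro hb
    obtain ⟨u, d, huu, huT⟩ := ih (by omega)
    classical
    set G : Fin b × Fin k × Fin (m+1) → EuclideanSpace ℂ (Fin n) :=
      fun q => Fin.cases (u q.1 q.2.1) (fun j => (T j) (u q.1 q.2.1)) q.2.2 with hG
    set W := Submodule.span ℂ (Set.range G) with hW
    have hWfr : finrank ℂ W ≤ b * (k * (m+1)) := by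
      have h2 := finrank_range_le_card (R := ℂ) G
      unfold Set.finrank at h2
      rw [Fintype.card_prod, Fintype.card_prod, Fintype.card_fin, Fintype.card_fin,
        Fintype.card_fin] at h2
      calc finrank ℂ W ≤ b * (k * (m+1)) := by rw [hW]; exact h2
        _ = b * (k * (m+1)) := rfl
    have hdim : finrank ℂ W + ((k-1) * (m+1)) * m < n := by
      have h1 : b * (k * (m+1)) ≤ (m+1) * (k * (p-1)) := by
        calc b * (k * (m+1)) ≤ (p-1) * (k * (m+1)) :=
              Nat.mul_le_mul_right _ (by omega)
          _ = (m+1) * (k * (p-1)) := by ring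
      have h2 : ((k-1) * (m+1)) * m + 1 ≤ (m+1) * ((m+1) * (k-1)) := by
        have h3 : (m+1) * ((m+1) * (k-1)) = ((k-1) * (m+1)) * m + (k-1) * (m+1) := by ring
        have h4 : 1 ≤ (k-1) * (m+1) := by
          have : 1 ≤ k - 1 := by omega
          calc 1 = 1 * 1 := rfl
            _ ≤ (k-1) * (m+1) := Nat.mul_le_mul this (by omega)
        omega
      have h5 : (m+1) * ((m+1) * (k-1) + k * (p-1))
          = (m+1) * ((m+1) * (k-1)) + (m+1) * (k * (p-1)) := by ring
      omega
    obtain ⟨unew, c, hperp, hnewuu, hnewuT⟩ := block_lemma hm (le_of_lt hk) T hT W hdim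
    have hmemu : ∀ a s, u a s ∈ W := by
      intro a s
      apply Submodule.subset_span
      exact ⟨(a, s, 0), by simp [hG]⟩
    have hmemT : ∀ j a s, (T j) (u a s) ∈ W := by
      intro j a s
      apply Submodule.subset_span
      refine ⟨(a, s, j.succ), ?_⟩
      rw [hG]
      simp only
      rw [Fin.cases_succ]
    have hperp1 : ∀ t, ∀ v ∈ W, ⟪v, unew t⟫_ℂ = 0 := by
      intro t v hv
      exact (Submodule.mem_orthogonal W (unew t)).1 (hperp t) v hv
    have hperp2 : ∀ t, ∀ v ∈ W, ⟪unew t, v⟫_ℂ = 0 := by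
      intro t v hv
      exact (Submodule.mem_orthogonal' W (unew t)).1 (hperp t) v hv
    have hclne : ∀ (a0 : Fin b), Fin.castSucc a0 ≠ Fin.last b :=
      fun a0 => (Fin.castSucc_lt_last a0).ne
    refine ⟨Fin.snoc u unew, Fin.snoc d c, ?_, ?_⟩
    · intro a s a' t
      refine Fin.lastCases ?_ ?_ a <;> [skip; intro a0] <;>
        (refine Fin.lastCases ?_ ?_ a' <;> [skip; intro a0'])
      · simp only [Fin.snoc_last]
        rw [hnewuu s t]
        simp
      · simp only [Fin.snoc_last, Fin.snoc_castSucc]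
        rw [hperp2 s _ (hmemu a0' t), if_neg (fun h => (hclne a0') (h.1.symm))]
      · simp only [Fin.snoc_last, Fin.snoc_castSucc]
        rw [hperp1 t _ (hmemu a0 s), if_neg (fun h => (hclne a0) h.1)]
      · simp only [Fin.snoc_castSucc]
        rw [huu a0 s a0' t]
        congr 1
        simp [Fin.castSucc_inj]
    · intro j a s a' t
      refine Fin.lastCases ?_ ?_ a <;> [skip; intro a0] <;>
        (refine Fin.lastCases ?_ ?_ a' <;> [skip; intro a0'])
      · simp only [Fin.snoc_last]
        rw [hnewuT j s t]
        simp
      · simp only [Fin.snoc_last, Fin.snoc_castSucc]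
        rw [hperp2 s _ (hmemT j a0' t), if_neg (fun h => (hclne a0') (h.1.symm))]
      · simp only [Fin.snoc_last, Fin.snoc_castSucc]
        rw [← hT j (u a0 s) (unew t), hperp1 t _ (hmemT j a0 s),
          if_neg (fun h => (hclne a0) h.1)]
      · simp only [Fin.snoc_castSucc]
        rw [huT j a0 s a0' t]
        congr 1
        simp [Fin.castSucc_inj]


end
end Helpers

open scoped InnerProductSpace ComplexConjugate

/-- Theorem 2.3: If `A = (A_1, …, A_m)` is an `m`-tuple of `n × n`
Hermitian matrices, `m, p ≥ 1`, `k > 1`, and `n ≥ (m+1)((m+1)(k-1) + k(p-1))`, then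
`Λ_{(k:p)}(A)` is nonempty: there exist `p × p` real diagonal matrices `D_1, …, D_m`
and an `n × (kp)` matrix `V` with `V* V = I_{kp}` and `V* A_j V = D_j ⊗ I_k` for all `j`. -/
theorem stmt1 (n m k p : ℕ) (hm : 1 ≤ m) (hp : 1 ≤ p) (hk : 1 < k)
    (A : Fin m → Matrix (Fin n) (Fin n) ℂ) (hA : ∀ j, (A j).IsHermitian)
    (hn : (m + 1) * ((m + 1) * (k - 1) + k * (p - 1)) ≤ n) :
    ∃ (D : Fin m → Matrix (Fin p) (Fin p) ℝ) (V : Matrix (Fin n) (Fin p × Fin k) ℂ),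
      (∀ j, (D j).IsDiag) ∧ Vᴴ * V = 1 ∧
      ∀ j, Vᴴ * A j * V =
        ((D j).map (Complex.ofReal ·)) ⊗ₖ (1 : Matrix (Fin k) (Fin k) ℂ) := by
  classical
  set T : Fin m → (EuclideanSpace ℂ (Fin n) →ₗ[ℂ] EuclideanSpace ℂ (Fin n)) :=
    fun j => Matrix.toEuclideanLin (A j) with hTdef
  have hT : ∀ j, (T j).IsSymmetric := fun j => Matrix.isHermitian_iff_isSymmetric.mp (hA j)
  obtain ⟨u, d, huu, huT⟩ := blocks_lemma hm hk T hT hn p (le_refl p)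
  set V : Matrix (Fin n) (Fin p × Fin k) ℂ :=
    Matrix.of (fun r (c : Fin p × Fin k) => u c.1 c.2 r) with hV
  have happly : ∀ j (v : EuclideanSpace ℂ (Fin n)) (r : Fin n),
      ((T j) v) r = ∑ r', A j r r' * v r' := by
    intro j v r
    rw [hTdef]
    simp only
    rw [Matrix.toEuclideanLin_apply]
    rfl
  have hentry : ∀ j (v v' : EuclideanSpace ℂ (Fin n)),
      ⟪v, (T j) v'⟫_ℂ = ∑ r, (starRingEnd ℂ) (v r) * ∑ r', A j r r' * v' r' := by
    intro j v v'
    rw [PiLp.inner_apply]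
    refine Finset.sum_congr rfl fun r _ => ?_
    rw [RCLike.inner_apply, happly j v' r]
    exact mul_comm _ _
  have hinner : ∀ (v v' : EuclideanSpace ℂ (Fin n)),
      ⟪v, v'⟫_ℂ = ∑ r, (starRingEnd ℂ) (v r) * v' r := by
    intro v v'
    rw [PiLp.inner_apply]
    refine Finset.sum_congr rfl fun r _ => ?_
    rw [RCLike.inner_apply]
    exact mul_comm _ _
  refine ⟨fun j => Matrix.diagonal (fun a => d a j), V,
    fun j => Matrix.isDiag_diagonal _, ?_, ?_⟩
  · ext c c'
    rw [Matrix.mul_apply, Matrix.one_apply]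
    have h1 := huu c.1 c.2 c'.1 c'.2
    rw [hinner] at h1
    calc ∑ r, Vᴴ c r * V r c'
        = ∑ r, (starRingEnd ℂ) (u c.1 c.2 r) * u c'.1 c'.2 r := by
          refine Finset.sum_congr rfl fun r _ => ?_
          rw [Matrix.conjTranspose_apply, hV]
          simp [RCLike.star_def]
      _ = if c.1 = c'.1 ∧ c.2 = c'.2 then 1 else 0 := h1
      _ = if c = c' then 1 else 0 := by
          congr 1
          rw [Prod.ext_iff]
  · intro j
    ext c c'
    have h1 := huT j c.1 c.2 c'.1 c'.2
    rw [hentry] at h1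
    calc (Vᴴ * A j * V) c c'
        = ∑ r', (∑ r, Vᴴ c r * A j r r') * V r' c' := by
          rw [Matrix.mul_apply]
          refine Finset.sum_congr rfl fun r' _ => ?_
          rw [Matrix.mul_apply]
      _ = ∑ r, (starRingEnd ℂ) (u c.1 c.2 r) * ∑ r', A j r r' * u c'.1 c'.2 r' := by
          simp only [Finset.sum_mul]
          rw [Finset.sum_comm]
          refine Finset.sum_congr rfl fun r _ => ?_
          rw [Finset.mul_sum]
          refine Finset.sum_congr rfl fun r' _ => ?_
          rw [Matrix.conjTranspose_apply, hV]
          simp only [Matrix.of_apply, RCLike.star_def]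
          ring
      _ = if c.1 = c'.1 ∧ c.2 = c'.2 then ((d c.1 j : ℝ) : ℂ) else 0 := h1
      _ = (((Matrix.diagonal fun a => d a j).map (Complex.ofReal ·))
            ⊗ₖ (1 : Matrix (Fin k) (Fin k) ℂ)) c c' := by
          rw [show c = (c.1, c.2) from rfl, show c' = (c'.1, c'.2) from rfl]
          rw [Matrix.kroneckerMap_apply, Matrix.map_apply, Matrix.diagonal_apply,
            Matrix.one_apply]
          by_cases h1 : c.1 = c'.1 <;> by_cases h2 : c.2 = c'.2 <;>
            simp [h1, h2]
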